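/- Fix r₀ > 0 and define μ : [0,∞) → ℝ by μ(t) = arccosh( cosh²(r₀) − sinh²(r₀)·cos( min{π, t/sinh(r₀)} ) ). Then for all t ≥ 0, (2r₀/(π·sinh(r₀)))·min{π·sinh(r₀), t} ≤ μ(t) ≤ t. -/

import Mathlib

lemma my_sinh_nonneg {y : ℝ} (hy : 0 ≤ y) : 0 ≤ Real.sinh y :=
  Real.sinh_nonneg_iff.2 hy

lemma arcosh_cosh' {y : ℝ} (hy : 0 ≤ y) :
    Real.log (Real.cosh y + Real.sqrt (Real.cosh y ^ 2 - 1)) = y := by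
  have h : Real.cosh y ^ 2 - 1 = Real.sinh y ^ 2 := by
    have := Real.cosh_sq_sub_sinh_sq y; linarith
  rw [h, Real.sqrt_sq (my_sinh_nonneg hy), Real.cosh_add_sinh, Real.log_exp]

lemma arcosh_mono {a b : ℝ} (ha : 1 ≤ a) (hab : a ≤ b) :
    Real.log (a + Real.sqrt (a ^ 2 - 1)) ≤ Real.log (b + Real.sqrt (b ^ 2 - 1)) := by
  have h1 : Real.sqrt (a ^ 2 - 1) ≤ Real.sqrt (b ^ 2 - 1) := by
    apply Real.sqrt_le_sqrt; nlinarith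
  exact Real.log_le_log (by positivity) (by linarith)

lemma convexOn_sinh : ConvexOn ℝ (Set.Ici 0) Real.sinh := by
  apply convexOn_of_deriv2_nonneg (convex_Ici 0) Real.continuous_sinh.continuousOn
    Real.differentiable_sinh.differentiableOn
  · rw [Real.deriv_sinh]; exact Real.differentiable_cosh.differentiableOn
  · intro x hx
    simp only [Function.iterate_succ, Function.iterate_zero, Function.comp_apply, id]
    rw [Real.deriv_sinh, Real.deriv_cosh]
    exact my_sinh_nonneg (le_of_lt (by simpa using hx))

lemma sinh_mul_le {u a : ℝ} (hu : 0 ≤ u) (hu1 : u ≤ 1) (ha : 0 ≤ a) :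
    Real.sinh (u * a) ≤ u * Real.sinh a := by
  have := convexOn_sinh.2 (Set.mem_Ici.2 ha) (Set.self_mem_Ici) hu
    (by linarith : (0:ℝ) ≤ 1 - u) (by ring)
  simpa [smul_eq_mul] using this



/-- The inverse hyperbolic cosine, defined (for `x ≥ 1`) by
`arcosh x = log (x + sqrt (x² − 1))`. -/
noncomputable def arcosh (x : ℝ) : ℝ :=
  Real.log (x + Real.sqrt (x ^ 2 - 1))

/-- The comparison function `μ` for the hyperbolic cone of radius `r₀`:
`μ(t) = arcosh( cosh²r₀ − sinh²r₀ · cos(min{π, t/sinh r₀}) )`. -/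
noncomputable def mucone (r₀ t : ℝ) : ℝ :=
  arcosh (Real.cosh r₀ ^ 2 -
    Real.sinh r₀ ^ 2 * Real.cos (min Real.pi (t / Real.sinh r₀)))

/-- the two-sided bound
`(2r₀/(π sinh r₀)) min{π sinh r₀, t} ≤ μ(t) ≤ t` for `t ≥ 0`. -/
theorem mucone_bounds (r₀ : ℝ) (hr₀ : 0 < r₀) :
    ∀ t : ℝ, 0 ≤ t →
      (2 * r₀ / (Real.pi * Real.sinh r₀)) * min (Real.pi * Real.sinh r₀) t ≤
          mucone r₀ t ∧
        mucone r₀ t ≤ t := by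
  intro t ht
  have hs : 0 < Real.sinh r₀ := Real.sinh_pos_iff.2 hr₀
  have hπ : 0 < Real.pi := Real.pi_pos
  set s := Real.sinh r₀ with hsdef
  set θ := min Real.pi (t / s) with hθdef
  have hθ0 : 0 ≤ θ := le_min hπ.le (by positivity)
  have hθπ : θ ≤ Real.pi := min_le_left _ _
  have hθts : s * θ ≤ t := by
    have : θ ≤ t / s := min_le_right _ _
    calc s * θ ≤ s * (t / s) := by nlinarith
      _ = t := by field_simp
  -- the argument of arcosh
  set x := Real.cosh r₀ ^ 2 - s ^ 2 * Real.cos θ with hxdef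
  have hpyth : Real.cosh r₀ ^ 2 - s ^ 2 = 1 := Real.cosh_sq_sub_sinh_sq r₀
  have hcosθ : Real.cos θ = 1 - 2 * Real.sin (θ / 2) ^ 2 := by
    have h1 := Real.cos_two_mul' (θ / 2)
    have h2 := Real.sin_sq_add_cos_sq (θ / 2)
    have : (2 : ℝ) * (θ / 2) = θ := by ring
    rw [this] at h1; linarith
  have hxid : x = 1 + 2 * (s * Real.sin (θ / 2)) ^ 2 := by
    rw [hxdef, hcosθ]; ring_nf; nlinarith [hpyth]
  have hsin0 : 0 ≤ Real.sin (θ / 2) :=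
    Real.sin_nonneg_of_nonneg_of_le_pi (by linarith) (by linarith)
  have hx1 : 1 ≤ x := by nlinarith [sq_nonneg (s * Real.sin (θ / 2))]
  constructor
  · -- lower bound
    set L := 2 * r₀ * θ / Real.pi with hLdef
    have hL0 : 0 ≤ L := by positivity
    have hmin : min (Real.pi * s) t = s * θ := by
      rcases le_total Real.pi (t / s) with h | h
      · have hθπ' : θ = Real.pi := min_eq_left h
        have : Real.pi * s ≤ t := by
          calc Real.pi * s ≤ (t / s) * s := by nlinarith
            _ = t := by field_simp
        rw [min_eq_left this, hθπ']; ring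
      · have hθ' : θ = t / s := min_eq_right h
        have : t ≤ Real.pi * s := by
          calc t = (t / s) * s := by field_simp
            _ ≤ Real.pi * s := by nlinarith
        rw [min_eq_right this, hθ']; field_simp
    rw [hmin]
    have hLhs : 2 * r₀ / (Real.pi * s) * (s * θ) = L := by
      rw [hLdef]; field_simp
    rw [hLhs]
    -- cosh L ≤ x
    have hhalf : L / 2 = (θ / Real.pi) * r₀ := by rw [hLdef]; ring
    have hsinhL : Real.sinh (L / 2) ≤ s * Real.sin (θ / 2) := by
      rw [hhalf]
      have h1 : Real.sinh ((θ / Real.pi) * r₀) ≤ (θ / Real.pi) * s :=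
        sinh_mul_le (by positivity) (by rw [div_le_one hπ]; exact hθπ) hr₀.le
      have h2 : θ / Real.pi ≤ Real.sin (θ / 2) := by
        have := Real.mul_le_sin (x := θ / 2) (by linarith) (by linarith)
        calc θ / Real.pi = 2 / Real.pi * (θ / 2) := by field_simp
          _ ≤ Real.sin (θ / 2) := this
      calc Real.sinh ((θ / Real.pi) * r₀) ≤ (θ / Real.pi) * s := h1
        _ ≤ Real.sin (θ / 2) * s := by nlinarith
        _ = s * Real.sin (θ / 2) := by ring
    have hcoshL : Real.cosh L ≤ x := by
      have hL2 : Real.cosh L = 1 + 2 * Real.sinh (L / 2) ^ 2 := by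
        have h1 : Real.cosh (2 * (L / 2)) = Real.cosh (L / 2) ^ 2 + Real.sinh (L / 2) ^ 2 :=
          Real.cosh_two_mul (L / 2)
        have h2 := Real.cosh_sq_sub_sinh_sq (L / 2)
        have : (2 : ℝ) * (L / 2) = L := by ring
        rw [this] at h1; linarith
      have hsnn : 0 ≤ Real.sinh (L / 2) := my_sinh_nonneg (by positivity)
      have hsq : Real.sinh (L / 2) ^ 2 ≤ (s * Real.sin (θ / 2)) ^ 2 :=
        pow_le_pow_left₀ hsnn hsinhL 2
      rw [hL2, hxid]; linarith
    calc L = Real.log (Real.cosh L + Real.sqrt (Real.cosh L ^ 2 - 1)) :=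
          (arcosh_cosh' hL0).symm
      _ ≤ mucone r₀ t := arcosh_mono (Real.one_le_cosh L) hcoshL
  · -- upper bound
    have hsinhalf : s * Real.sin (θ / 2) ≤ Real.sinh (t / 2) := by
      have h1 : Real.sin (θ / 2) ≤ θ / 2 := Real.sin_le (by linarith)
      have h2 : t / 2 ≤ Real.sinh (t / 2) := Real.self_le_sinh_iff.2 (by linarith)
      nlinarith
    have hxt : x ≤ Real.cosh t := by
      have hL2 : Real.cosh t = 1 + 2 * Real.sinh (t / 2) ^ 2 := by
        have h1 := Real.cosh_two_mul (t / 2)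
        have h2 := Real.cosh_sq_sub_sinh_sq (t / 2)
        have : (2 : ℝ) * (t / 2) = t := by ring
        rw [this] at h1; linarith
      have hsnn : 0 ≤ s * Real.sin (θ / 2) := mul_nonneg hs.le hsin0
      have hsq : (s * Real.sin (θ / 2)) ^ 2 ≤ Real.sinh (t / 2) ^ 2 :=
        pow_le_pow_left₀ hsnn hsinhalf 2
      rw [hL2, hxid]; linarith
    calc mucone r₀ t ≤ Real.log (Real.cosh t + Real.sqrt (Real.cosh t ^ 2 - 1)) :=
          arcosh_mono hx1 hxt
      _ = t := arcosh_cosh' ht
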